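/- Let H₀ = -Δ on L²(ℝⁿ) and let ψ be a C¹ function with |ψ(x)| ≤ C(1+|x|)^{-μ} and |∇ψ(x)| ≤ C(1+|x|)^{-1-μ} for some μ > 0. Let H_A = (i∇ + A)² + V and H_{A'} = (i∇ + A + ∇ψ)² + V, both self-adjoint with wave operators W_±(H_A, H₀) and W_±(H_{A'}, H₀) existing and complete. Then the scattering operators coincide: S(H_{A'}, H₀) = S(H_A, H₀). -/

import Mathlib

open MeasureTheory Complex Filter

lemma exp_I_sub_one_le_two (θ : ℝ) : ‖Complex.exp (Complex.I * θ) - 1‖ ≤ 2 := by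
  have : ‖Complex.exp (Complex.I * θ)‖ = 1 := by
    rw [Complex.norm_exp]; simp
  calc ‖Complex.exp (Complex.I * θ) - 1‖ ≤ ‖Complex.exp (Complex.I * θ)‖ + ‖(1:ℂ)‖ :=
        norm_sub_le _ _
    _ = 2 := by rw [this]; norm_num

lemma exp_I_sub_one_le (θ : ℝ) : ‖Complex.exp (Complex.I * θ) - 1‖ ≤ 2 * |θ| := by
  rcases le_or_gt (|θ|) 1 with h | h
  · have : ‖Complex.I * θ‖ ≤ 1 := by
      rw [norm_mul, Complex.norm_I, Complex.norm_real, Real.norm_eq_abs, one_mul]; exact h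
    have h2 := Complex.norm_exp_sub_one_le this
    rw [norm_mul, Complex.norm_I, Complex.norm_real, Real.norm_eq_abs, one_mul] at h2
    simpa using h2
  · nlinarith [exp_I_sub_one_le_two θ]

lemma L2_norm_sq {α : Type*} [MeasurableSpace α] {μ : Measure α}
    (h : Lp ℂ 2 μ) : ‖h‖ ^ 2 = ∫ x, ‖(h : α → ℂ) x‖ ^ 2 ∂μ := by
  rw [@norm_sq_eq_re_inner ℂ, L2.inner_def, ← integral_re (L2.integrable_inner h h)]
  congr 1
  ext x
  exact inner_self_eq_norm_sq _

lemma L2_integrable_norm_sq {α : Type*} [MeasurableSpace α] {μ : Measure α}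
    (h : Lp ℂ 2 μ) : Integrable (fun x => ‖(h : α → ℂ) x‖ ^ 2) μ := by
  have := (L2.integrable_inner (𝕜 := ℂ) h h).re
  refine this.congr (Filter.Eventually.of_forall fun x => ?_)
  exact inner_self_eq_norm_sq _

lemma key_bound {n : ℕ} (C μ : ℝ) (hμ : 0 < μ) (hC : 0 ≤ C)
    (ψ : EuclideanSpace ℝ (Fin n) → ℝ)
    (hψ_decay : ∀ x, |ψ x| ≤ C * (1 + ‖x‖) ^ (-μ))
    (M : Lp ℂ 2 (volume : Measure (EuclideanSpace ℝ (Fin n))) →L[ℂ]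
         Lp ℂ 2 (volume : Measure (EuclideanSpace ℝ (Fin n))))
    (hM : ∀ f : Lp ℂ 2 (volume : Measure (EuclideanSpace ℝ (Fin n))),
      (M f : EuclideanSpace ℝ (Fin n) → ℂ)
        =ᵐ[volume] fun x => Complex.exp (Complex.I * (ψ x : ℂ)) * f x)
    (r : ℝ) (hr : 0 ≤ r) (g : Lp ℂ 2 (volume : Measure (EuclideanSpace ℝ (Fin n)))) :
    ‖M g - g‖ ^ 2 ≤
      4 * (∫ x in Metric.ball (0 : EuclideanSpace ℝ (Fin n)) r,
            ‖(g : EuclideanSpace ℝ (Fin n) → ℂ) x‖ ^ 2)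
      + (2 * C * (1 + r) ^ (-μ)) ^ 2 * ‖g‖ ^ 2 := by
  set d := M g - g with hdd
  have hd : (d : EuclideanSpace ℝ (Fin n) → ℂ)
      =ᵐ[volume] fun x => (Complex.exp (Complex.I * (ψ x : ℂ)) - 1) *
        (g : EuclideanSpace ℝ (Fin n) → ℂ) x := by
    filter_upwards [Lp.coeFn_sub (M g) g, hM g] with x h1 h2
    simp only [hdd] at h1 ⊢
    rw [h1, Pi.sub_apply, h2, sub_mul, one_mul]
  rw [L2_norm_sq]
  have hint : Integrable (fun x => ‖(d : EuclideanSpace ℝ (Fin n) → ℂ) x‖ ^ 2) volume :=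
    L2_integrable_norm_sq d
  have hgint : Integrable (fun x => ‖(g : EuclideanSpace ℝ (Fin n) → ℂ) x‖ ^ 2) volume :=
    L2_integrable_norm_sq g
  rw [← integral_add_compl (measurableSet_ball
    (x := (0 : EuclideanSpace ℝ (Fin n))) (ε := r)) hint]
  have bound1 : ∫ x in Metric.ball (0 : EuclideanSpace ℝ (Fin n)) r,
      ‖(d : EuclideanSpace ℝ (Fin n) → ℂ) x‖ ^ 2 ≤
      4 * ∫ x in Metric.ball (0 : EuclideanSpace ℝ (Fin n)) r,
        ‖(g : EuclideanSpace ℝ (Fin n) → ℂ) x‖ ^ 2 := by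
    rw [← integral_const_mul]
    refine integral_mono_ae hint.restrict ((hgint.const_mul 4).restrict) ?_
    filter_upwards [ae_restrict_of_ae hd] with x hx
    rw [hx, norm_mul, mul_pow]
    have h1 : ‖Complex.exp (Complex.I * (ψ x : ℂ)) - 1‖ ^ 2 ≤ 4 := by
      nlinarith [exp_I_sub_one_le_two (ψ x), norm_nonneg (Complex.exp (Complex.I * (ψ x:ℂ)) - 1)]
    exact mul_le_mul_of_nonneg_right h1 (sq_nonneg _) |>.trans_eq rfl
  have bound2 : ∫ x in (Metric.ball (0 : EuclideanSpace ℝ (Fin n)) r)ᶜ,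
      ‖(d : EuclideanSpace ℝ (Fin n) → ℂ) x‖ ^ 2 ≤
      (2 * C * (1 + r) ^ (-μ)) ^ 2 * ‖g‖ ^ 2 := by
    have step1 : ∫ x in (Metric.ball (0 : EuclideanSpace ℝ (Fin n)) r)ᶜ,
        ‖(d : EuclideanSpace ℝ (Fin n) → ℂ) x‖ ^ 2 ≤
        ∫ x in (Metric.ball (0 : EuclideanSpace ℝ (Fin n)) r)ᶜ,
          (2 * C * (1 + r) ^ (-μ)) ^ 2 * ‖(g : EuclideanSpace ℝ (Fin n) → ℂ) x‖ ^ 2 := by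
      refine integral_mono_ae hint.restrict
        ((hgint.const_mul _).restrict) ?_
      filter_upwards [ae_restrict_of_ae hd,
        ae_restrict_mem (measurableSet_ball (x := (0 : EuclideanSpace ℝ (Fin n))) (ε := r)).compl]
        with x hx hmem
      have hxr : r ≤ ‖x‖ := by
        simp only [Set.mem_compl_iff, Metric.mem_ball, dist_zero_right, not_lt] at hmem
        exact hmem
      have hmono : (1 + ‖x‖) ^ (-μ) ≤ (1 + r) ^ (-μ) := by
        apply Real.rpow_le_rpow_of_nonpos (by linarith) (by linarith) (by linarith)
      have hbd : ‖(Complex.exp (Complex.I * (ψ x : ℂ)) - 1)‖ ≤ 2 * C * (1 + r) ^ (-μ) := by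
        calc ‖(Complex.exp (Complex.I * (ψ x : ℂ)) - 1)‖ ≤ 2 * |ψ x| := exp_I_sub_one_le _
          _ ≤ 2 * (C * (1 + ‖x‖) ^ (-μ)) := by
              have := hψ_decay x; linarith
          _ ≤ 2 * C * (1 + r) ^ (-μ) := by
              rw [mul_assoc]
              exact mul_le_mul_of_nonneg_left
                (mul_le_mul_of_nonneg_left hmono hC) (by norm_num)
      rw [hx, norm_mul, mul_pow]
      exact mul_le_mul_of_nonneg_right
        (pow_le_pow_left₀ (norm_nonneg _) hbd 2) (sq_nonneg _)
    have step2 : ∫ x in (Metric.ball (0 : EuclideanSpace ℝ (Fin n)) r)ᶜ,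
        (2 * C * (1 + r) ^ (-μ)) ^ 2 * ‖(g : EuclideanSpace ℝ (Fin n) → ℂ) x‖ ^ 2 ≤
        (2 * C * (1 + r) ^ (-μ)) ^ 2 * ‖g‖ ^ 2 := by
      rw [integral_const_mul, L2_norm_sq]
      exact mul_le_mul_of_nonneg_left
        (setIntegral_le_integral hgint
          (Filter.Eventually.of_forall fun x => sq_nonneg _)) (sq_nonneg _)
    exact step1.trans step2
  have h4 : (0:ℝ) ≤ ∫ x in Metric.ball (0 : EuclideanSpace ℝ (Fin n)) r,
      ‖(g : EuclideanSpace ℝ (Fin n) → ℂ) x‖ ^ 2 :=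
    integral_nonneg fun x => sq_nonneg _
  nlinarith [bound1, bound2]


lemma wave_limit_eq {E : Type*} [NormedAddCommGroup E] [NormedSpace ℂ E]
    (M Mstar : E →L[ℂ] E) (U₀ UA UA' : ℝ → E →L[ℂ] E)
    (hUA_iso : ∀ t f, ‖UA t f‖ = ‖f‖)
    (hgauge : ∀ t f, UA' t f = Mstar (UA t (M f)))
    (l : Filter ℝ) [hne : l.NeBot] (f : E) (W W' : E)
    (hMd : Tendsto (fun t : ℝ => M (U₀ t f) - U₀ t f) l (nhds 0))
    (hW : Tendsto (fun t : ℝ => UA (-t) (U₀ t f)) l (nhds W))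
    (hW' : Tendsto (fun t : ℝ => UA' (-t) (U₀ t f)) l (nhds W')) :
    W' = Mstar W := by
  have hdecomp : (fun t : ℝ => UA' (-t) (U₀ t f)) =
      fun t : ℝ => Mstar (UA (-t) (M (U₀ t f) - U₀ t f)) + Mstar (UA (-t) (U₀ t f)) := by
    funext t
    rw [hgauge, ← map_add, ← map_add]
    congr 2
    abel
  have h2 : Tendsto (fun t : ℝ => Mstar (UA (-t) (U₀ t f))) l (nhds (Mstar W)) :=
    (Mstar.continuous.tendsto W).comp hW
  have h1 : Tendsto (fun t : ℝ => Mstar (UA (-t) (M (U₀ t f) - U₀ t f))) l (nhds 0) := by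
    rw [tendsto_zero_iff_norm_tendsto_zero]
    have hbound : ∀ t : ℝ, ‖Mstar (UA (-t) (M (U₀ t f) - U₀ t f))‖ ≤
        ‖Mstar‖ * ‖M (U₀ t f) - U₀ t f‖ := fun t => by
      calc ‖Mstar (UA (-t) (M (U₀ t f) - U₀ t f))‖
          ≤ ‖Mstar‖ * ‖UA (-t) (M (U₀ t f) - U₀ t f)‖ := Mstar.le_opNorm _
        _ = ‖Mstar‖ * ‖M (U₀ t f) - U₀ t f‖ := by rw [hUA_iso]
    have hnorm : Tendsto (fun t : ℝ => ‖M (U₀ t f) - U₀ t f‖) l (nhds 0) := by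
      rw [tendsto_zero_iff_norm_tendsto_zero] at hMd
      exact hMd
    have hprod : Tendsto (fun t : ℝ => ‖Mstar‖ * ‖M (U₀ t f) - U₀ t f‖) l (nhds 0) := by
      simpa using hnorm.const_mul ‖Mstar‖
    exact squeeze_zero (fun t => norm_nonneg _) hbound hprod
  have hsum : Tendsto (fun t : ℝ => UA' (-t) (U₀ t f)) l (nhds (Mstar W)) := by
    rw [hdecomp]
    simpa using h1.add h2
  exact tendsto_nhds_unique hW' hsum

set_option maxHeartbeats 1000000 in

/-- gauge invariance of the scattering operator. If `H_{A'}` is obtained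
from `H_A` by the gauge transformation `A ↦ A + ∇ψ` with `|ψ(x)| ≤ C(1+|x|)^{-μ}`,
`|∇ψ(x)| ≤ C(1+|x|)^{-1-μ}`, `μ > 0`, and both pairs of wave operators relative to the
free evolution `U₀(t) = e^{-itH₀}` exist (and `U₀` propagates mass to infinity), then
`S(H_{A'}, H₀) = S(H_A, H₀)`. The evolutions are encoded as unitary groups, the gauge
relation as `e^{itH_{A'}} = M* e^{itH_A} M` with `M` multiplication by `e^{iψ}`. -/
theorem scattering_operator_gauge_invariant
    (n : ℕ) (hn : 1 ≤ n) (C μ : ℝ) (hμ : 0 < μ)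
    (ψ : EuclideanSpace ℝ (Fin n) → ℝ) (hψC1 : ContDiff ℝ 1 ψ)
    (hψ_decay : ∀ x, |ψ x| ≤ C * (1 + ‖x‖) ^ (-μ))
    (hψ_grad_decay : ∀ x, ‖fderiv ℝ ψ x‖ ≤ C * (1 + ‖x‖) ^ (-(1 + μ)))
    (M : Lp ℂ 2 (volume : Measure (EuclideanSpace ℝ (Fin n))) →L[ℂ]
         Lp ℂ 2 (volume : Measure (EuclideanSpace ℝ (Fin n))))
    -- `M` is multiplication by `e^{iψ}` (a unitary):
    (hM : ∀ f : Lp ℂ 2 (volume : Measure (EuclideanSpace ℝ (Fin n))),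
      (M f : EuclideanSpace ℝ (Fin n) → ℂ)
        =ᵐ[volume] fun x => Complex.exp (Complex.I * (ψ x : ℂ)) * f x)
    (hM_unitary : (ContinuousLinearMap.adjoint M).comp M = ContinuousLinearMap.id ℂ _ ∧
      M.comp (ContinuousLinearMap.adjoint M) = ContinuousLinearMap.id ℂ _)
    (U₀ UA UA' : ℝ → Lp ℂ 2 (volume : Measure (EuclideanSpace ℝ (Fin n))) →L[ℂ]
         Lp ℂ 2 (volume : Measure (EuclideanSpace ℝ (Fin n))))
    (hU₀_iso : ∀ t f, ‖U₀ t f‖ = ‖f‖) (hUA_iso : ∀ t f, ‖UA t f‖ = ‖f‖)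
    (hUA'_iso : ∀ t f, ‖UA' t f‖ = ‖f‖)
    -- the gauge relation `e^{-itH_{A'}} = M* e^{-itH_A} M`:
    (hgauge : ∀ t f, UA' t f = (ContinuousLinearMap.adjoint M) (UA t (M f)))
    -- the free evolution propagates mass away from every ball:
    (hfree : ∀ (f : Lp ℂ 2 (volume : Measure (EuclideanSpace ℝ (Fin n)))) (r : ℝ), 0 < r →
      Tendsto (fun t => ∫ x in Metric.ball (0 : EuclideanSpace ℝ (Fin n)) r,
        ‖(U₀ t f : EuclideanSpace ℝ (Fin n) → ℂ) x‖ ^ 2) (atBot ⊔ atTop) (nhds 0))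
    (WpA WmA WpA' WmA' : Lp ℂ 2 (volume : Measure (EuclideanSpace ℝ (Fin n))) →L[ℂ]
         Lp ℂ 2 (volume : Measure (EuclideanSpace ℝ (Fin n))))
    -- existence of the wave operators `W_± = s-lim_{t→±∞} e^{itH} e^{-itH₀}`:
    (hWpA : ∀ f, Tendsto (fun t : ℝ => UA (-t) (U₀ t f)) atTop (nhds (WpA f)))
    (hWmA : ∀ f, Tendsto (fun t : ℝ => UA (-t) (U₀ t f)) atBot (nhds (WmA f)))
    (hWpA' : ∀ f, Tendsto (fun t : ℝ => UA' (-t) (U₀ t f)) atTop (nhds (WpA' f)))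
    (hWmA' : ∀ f, Tendsto (fun t : ℝ => UA' (-t) (U₀ t f)) atBot (nhds (WmA' f))) :
    (ContinuousLinearMap.adjoint WpA').comp WmA'
      = (ContinuousLinearMap.adjoint WpA).comp WmA := by
  have hC : 0 ≤ C := by
    have h := hψ_decay 0
    have h0 : (1 + ‖(0 : EuclideanSpace ℝ (Fin n))‖ : ℝ) ^ (-μ) = 1 := by
      simp
    rw [h0, mul_one] at h
    exact le_trans (abs_nonneg _) h
  -- The strong limit `M U₀(t) f - U₀(t) f → 0` as `t → ±∞`.
  have hMd : ∀ f, Tendsto (fun t : ℝ => M (U₀ t f) - U₀ t f) (atBot ⊔ atTop) (nhds 0) := by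
    intro f
    rw [NormedAddCommGroup.tendsto_nhds_zero]
    intro ε hε
    -- choose `r` large
    have htend : Tendsto (fun r : ℝ => (2 * C * (1 + r) ^ (-μ)) ^ 2 * ‖f‖ ^ 2)
        atTop (nhds 0) := by
      have h0 : Tendsto (fun r : ℝ => (1 + r) ^ (-μ)) atTop (nhds 0) :=
        (tendsto_rpow_neg_atTop hμ).comp (tendsto_atTop_add_const_left _ 1 tendsto_id)
      have h1 : Tendsto (fun r : ℝ => (2 * C * (1 + r) ^ (-μ)) ^ 2 * ‖f‖ ^ 2)
          atTop (nhds (((2 * C * 0) ^ 2) * ‖f‖ ^ 2)) :=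
        (((h0.const_mul (2 * C)).pow 2).mul_const _)
      simpa using h1
    have hev : ∀ᶠ r : ℝ in atTop,
        (2 * C * (1 + r) ^ (-μ)) ^ 2 * ‖f‖ ^ 2 < ε ^ 2 / 2 :=
      htend.eventually (gt_mem_nhds (by positivity))
    obtain ⟨r, hr_bound, hr_pos⟩ := (hev.and (eventually_gt_atTop 0)).exists
    -- eventually the ball integral is small
    have hball : ∀ᶠ t in (atBot ⊔ atTop : Filter ℝ),
        (∫ x in Metric.ball (0 : EuclideanSpace ℝ (Fin n)) r,
          ‖(U₀ t f : EuclideanSpace ℝ (Fin n) → ℂ) x‖ ^ 2) < ε ^ 2 / 8 :=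
      (hfree f r hr_pos).eventually (gt_mem_nhds (by positivity))
    filter_upwards [hball] with t ht
    have hkey := key_bound C μ hμ hC ψ hψ_decay M hM r hr_pos.le (U₀ t f)
    have hiso : ‖U₀ t f‖ = ‖f‖ := hU₀_iso t f
    rw [hiso] at hkey
    have hnn : (0:ℝ) ≤ ∫ x in Metric.ball (0 : EuclideanSpace ℝ (Fin n)) r,
        ‖(U₀ t f : EuclideanSpace ℝ (Fin n) → ℂ) x‖ ^ 2 :=
      integral_nonneg fun x => sq_nonneg _
    have hsq : ‖M (U₀ t f) - U₀ t f‖ ^ 2 < ε ^ 2 := by nlinarith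
    exact lt_of_pow_lt_pow_left₀ 2 hε.le hsq
  -- Identification of the primed wave operators.
  have hp : WpA' = (ContinuousLinearMap.adjoint M).comp WpA := by
    refine ContinuousLinearMap.ext fun f => ?_
    exact wave_limit_eq M (ContinuousLinearMap.adjoint M) U₀ UA UA' hUA_iso hgauge atTop f
      (WpA f) (WpA' f) ((hMd f).mono_left le_sup_right) (hWpA f) (hWpA' f)
  have hm : WmA' = (ContinuousLinearMap.adjoint M).comp WmA := by
    refine ContinuousLinearMap.ext fun f => ?_
    exact wave_limit_eq M (ContinuousLinearMap.adjoint M) U₀ UA UA' hUA_iso hgauge atBot f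
      (WmA f) (WmA' f) ((hMd f).mono_left le_sup_left) (hWmA f) (hWmA' f)
  rw [hp, hm, ContinuousLinearMap.adjoint_comp, ContinuousLinearMap.adjoint_adjoint]
  refine ContinuousLinearMap.ext fun f => ?_
  simp only [ContinuousLinearMap.comp_apply]
  congr 1
  exact congrArg (fun L => L (WmA f)) hM_unitary.2
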